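/- Let B be a Boolean algebra and L a subset of B containing ⊥ and ⊤ and closed under ⊓ and ⊔ (a bounded sublattice of B). Then an element x of B belongs to the Boolean subalgebra of B generated by L if and only if x is a finite meet of elements of the form uᶜ ⊔ v with u, v ∈ L (the empty meet being ⊤). -/

import Mathlib

/-- `g` is an interior operator on the Boolean algebra `B`. -/
def IsInteriorOp {B : Type*} [BooleanAlgebra B] (g : B → B) : Prop :=
  (∀ x, g x ≤ x) ∧ (∀ x, g (g x) = g x) ∧ (∀ x y, g (x ⊓ y) = g x ⊓ g y) ∧ g ⊤ = ⊤

/-- Membership in the Boolean subalgebra generated by `S`. -/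
inductive BoolGen {B : Type*} [BooleanAlgebra B] (S : Set B) : B → Prop
  | base : ∀ x, x ∈ S → BoolGen S x
  | bot : BoolGen S ⊥
  | top : BoolGen S ⊤
  | inf : ∀ x y, BoolGen S x → BoolGen S y → BoolGen S (x ⊓ y)
  | sup : ∀ x y, BoolGen S x → BoolGen S y → BoolGen S (x ⊔ y)
  | compl : ∀ x, BoolGen S x → BoolGen S xᶜ

/-- `h` is a homomorphism of interior algebras from `(A, gA)` to `(B, gB)`. -/
def IsIAHom {A B : Type*} [BooleanAlgebra A] [BooleanAlgebra B]
    (gA : A → A) (gB : B → B) (h : A → B) : Prop :=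
  (∀ x y, h (x ⊓ y) = h x ⊓ h y) ∧ (∀ x y, h (x ⊔ y) = h x ⊔ h y) ∧
  (∀ x, h xᶜ = (h x)ᶜ) ∧ h ⊥ = ⊥ ∧ h ⊤ = ⊤ ∧ (∀ x, h (gA x) = gB (h x))

def MeetL {B : Type*} [BooleanAlgebra B] (l : List (B × B)) : B :=
  (l.map fun p => p.1ᶜ ⊔ p.2).foldr (· ⊓ ·) ⊤

def GoodP {B : Type*} [BooleanAlgebra B] (L : Set B) (x : B) : Prop :=
  ∃ l : List (B × B), (∀ p ∈ l, p.1 ∈ L ∧ p.2 ∈ L) ∧ x = MeetL l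

lemma MeetL_nil {B : Type*} [BooleanAlgebra B] : MeetL ([] : List (B × B)) = ⊤ := rfl

lemma MeetL_cons {B : Type*} [BooleanAlgebra B] (p : B × B) (l : List (B × B)) :
    MeetL (p :: l) = (p.1ᶜ ⊔ p.2) ⊓ MeetL l := rfl

lemma MeetL_append {B : Type*} [BooleanAlgebra B] (l m : List (B × B)) :
    MeetL (l ++ m) = MeetL l ⊓ MeetL m := by
  induction l with
  | nil => simp [MeetL_nil]
  | cons p l ih => simp [MeetL_cons, ih, inf_assoc]

lemma goodP_sup_single {B : Type*} [BooleanAlgebra B] {L : Set B} {u v : B}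
    (hu : u ∈ L) (hv : v ∈ L)
    (hsup : ∀ a ∈ L, ∀ b ∈ L, a ⊔ b ∈ L)
    (hinf : ∀ a ∈ L, ∀ b ∈ L, a ⊓ b ∈ L) {y : B} (hy : GoodP L y) :
    GoodP L ((uᶜ ⊔ v) ⊔ y) := by
  obtain ⟨m, hm, rfl⟩ := hy
  refine ⟨m.map fun q => (u ⊓ q.1, v ⊔ q.2), ?_, ?_⟩
  · intro p hp
    simp only [List.mem_map] at hp
    obtain ⟨q, hq, rfl⟩ := hp
    exact ⟨hinf u hu q.1 (hm q hq).1, hsup v hv q.2 (hm q hq).2⟩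
  · induction m with
    | nil => simp [MeetL_nil]
    | cons q m ih =>
      have ih' := ih (fun p hp => hm p (List.mem_cons_of_mem _ hp))
      simp only [List.map_cons, MeetL_cons] at *
      rw [← ih']
      have : (u ⊓ q.1)ᶜ ⊔ (v ⊔ q.2) = (uᶜ ⊔ v) ⊔ (q.1ᶜ ⊔ q.2) := by
        rw [compl_inf]
        ac_rfl
      rw [this, sup_inf_left]

lemma goodP_sup {B : Type*} [BooleanAlgebra B] {L : Set B}
    (hsup : ∀ a ∈ L, ∀ b ∈ L, a ⊔ b ∈ L)
    (hinf : ∀ a ∈ L, ∀ b ∈ L, a ⊓ b ∈ L) {x y : B}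
    (hx : GoodP L x) (hy : GoodP L y) : GoodP L (x ⊔ y) := by
  obtain ⟨l, hl, rfl⟩ := hx
  induction l with
  | nil => exact ⟨[], by simp, by simp [MeetL_nil]⟩
  | cons p l ih =>
    have h1 : GoodP L ((p.1ᶜ ⊔ p.2) ⊔ y) :=
      goodP_sup_single (hl p (List.mem_cons_self)).1 (hl p (List.mem_cons_self)).2
        hsup hinf hy
    have h2 : GoodP L (MeetL l ⊔ y) := ih (fun q hq => hl q (List.mem_cons_of_mem _ hq))
    obtain ⟨a, ha, hae⟩ := h1
    obtain ⟨b, hb, hbe⟩ := h2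
    refine ⟨a ++ b, ?_, ?_⟩
    · intro q hq
      rcases List.mem_append.1 hq with h | h
      · exact ha q h
      · exact hb q h
    · rw [MeetL_append, ← hae, ← hbe, MeetL_cons, sup_inf_right]

lemma goodP_compl_meetL {B : Type*} [BooleanAlgebra B] {L : Set B}
    (hbot : ⊥ ∈ L) (htop : ⊤ ∈ L)
    (hinf : ∀ u ∈ L, ∀ v ∈ L, u ⊓ v ∈ L) (hsup : ∀ u ∈ L, ∀ v ∈ L, u ⊔ v ∈ L)
    (l : List (B × B)) (hl : ∀ p ∈ l, p.1 ∈ L ∧ p.2 ∈ L) :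
    GoodP L (MeetL l)ᶜ := by
  induction l with
  | nil => exact ⟨[(⊤, ⊥)], by simp [htop, hbot], by simp [MeetL_nil, MeetL_cons]⟩
  | cons p l ihl =>
    have h2 : GoodP L (MeetL l)ᶜ := ihl (fun q hq => hl q (List.mem_cons_of_mem _ hq))
    have hp := hl p (List.mem_cons_self)
    have h1 : GoodP L (p.1 ⊓ p.2ᶜ) :=
      ⟨[(⊤, p.1), (p.2, ⊥)], by simp [htop, hbot, hp.1, hp.2],
        by simp [MeetL_cons, MeetL_nil]⟩
    have : (MeetL (p :: l))ᶜ = (p.1 ⊓ p.2ᶜ) ⊔ (MeetL l)ᶜ := by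
      rw [MeetL_cons, compl_inf, compl_sup, compl_compl]
    rw [this]
    exact goodP_sup hsup hinf h1 h2

theorem boolGen_of_sublattice_iff {B : Type*} [BooleanAlgebra B] (L : Set B)
    (hbot : ⊥ ∈ L) (htop : ⊤ ∈ L)
    (hinf : ∀ u ∈ L, ∀ v ∈ L, u ⊓ v ∈ L) (hsup : ∀ u ∈ L, ∀ v ∈ L, u ⊔ v ∈ L) :
    ∀ x : B, BoolGen L x ↔
      ∃ l : List (B × B), (∀ p ∈ l, p.1 ∈ L ∧ p.2 ∈ L) ∧
        x = (l.map fun p => p.1ᶜ ⊔ p.2).foldr (· ⊓ ·) ⊤ := by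
  intro x
  constructor
  · intro h
    show GoodP L x
    induction h with
    | base x hx =>
      exact ⟨[(⊤, x)], by simp [htop, hx], by simp [MeetL_cons, MeetL_nil]⟩
    | bot =>
      exact ⟨[(⊤, ⊥)], by simp [htop, hbot], by simp [MeetL_cons, MeetL_nil]⟩
    | top => exact ⟨[], by simp, rfl⟩
    | inf a b _ _ iha ihb =>
      obtain ⟨la, hla, rfl⟩ := iha
      obtain ⟨lb, hlb, rfl⟩ := ihb
      refine ⟨la ++ lb, ?_, by rw [MeetL_append]⟩
      intro q hq
      rcases List.mem_append.1 hq with h | h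
      · exact hla q h
      · exact hlb q h
    | sup a b _ _ iha ihb => exact goodP_sup hsup hinf iha ihb
    | compl a _ ih =>
      obtain ⟨l, hl, rfl⟩ := ih
      exact goodP_compl_meetL hbot htop hinf hsup l hl
  · rintro ⟨l, hl, rfl⟩
    induction l with
    | nil => exact BoolGen.top
    | cons p l ih =>
      have h1 : BoolGen L (p.1ᶜ ⊔ p.2) :=
        BoolGen.sup _ _ (BoolGen.compl _ (BoolGen.base _ (hl p (List.mem_cons_self)).1))
          (BoolGen.base _ (hl p (List.mem_cons_self)).2)
      exact BoolGen.inf _ _ h1 (ih (fun q hq => hl q (List.mem_cons_of_mem _ hq)))
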